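/- Let s_1,...,s_N be nonnegative reals, set α_l = (1/(2l))∑_{i=1}^N s_i^l, and define β_k by the formal power series identity 1 + ∑_{k≥1} β_k z^k = exp(∑_{l≥1} α_l z^l). Let u be uniformly distributed on the unit sphere of R^N and x = ∑_{k=1}^N s_k u_k². Then for every positive integer k, E[x^k] = 2^k k! β_k / (N(N+2)···(N+2k-2)). -/

import Mathlib

open MeasureTheory

/-- The uniform (normalized Haar) probability measure on the unit sphere of `ℝ^N`. -/
noncomputable def sphereUniform (N : ℕ) :
    Measure (Metric.sphere (0 : EuclideanSpace ℝ (Fin N)) 1) :=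
  ((volume : Measure (EuclideanSpace ℝ (Fin N))).toSphere Set.univ)⁻¹ •
    (volume : Measure (EuclideanSpace ℝ (Fin N))).toSphere

open Real Set Finset PowerSeries


noncomputable def dfac (m : ℕ) : ℝ := ∏ j ∈ Finset.range m, (2 * (j : ℝ) + 1)

lemma dfac_succ (m : ℕ) : dfac (m + 1) = dfac m * (2 * (m:ℝ) + 1) := Finset.prod_range_succ _ _

lemma gmomIoi (a : ℕ) : ∫ x in Ioi (0:ℝ), x ^ a * Real.exp (-x ^ 2 / 2)
    = (1/2 : ℝ) ^ (-((a : ℝ) + 1) / 2) * (1 / 2) * Real.Gamma (((a : ℝ) + 1) / 2) := by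
  have h := integral_rpow_mul_exp_neg_mul_rpow (p := 2) (q := (a : ℝ)) (b := 1/2)
    two_pos (by exact_mod_cast neg_one_lt_zero.trans_le (Nat.cast_nonneg a)) one_half_pos
  have heq : ∀ x : ℝ, x ^ ((a : ℝ)) * Real.exp (-(1/2) * x ^ (2:ℝ))
      = x ^ a * Real.exp (-x ^ 2 / 2) := by
    intro x
    have h2 : x ^ ((2:ℝ)) = x ^ 2 := by
      rw [show ((2:ℝ)) = ((2:ℕ):ℝ) by norm_num, Real.rpow_natCast]
    rw [Real.rpow_natCast, h2, show -(1/2:ℝ) * x ^ 2 = -x ^ 2 / 2 by ring]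
  rw [← h]
  exact setIntegral_congr_fun measurableSet_Ioi fun x _ => (heq x).symm

lemma gpos (a : ℕ) : 0 < ∫ x in Ioi (0:ℝ), x ^ a * Real.exp (-x ^ 2 / 2) := by
  rw [gmomIoi]
  exact mul_pos (mul_pos (Real.rpow_pos_of_pos one_half_pos _) one_half_pos)
    (Real.Gamma_pos_of_pos (by positivity))

lemma gstep (a : ℕ) : ∫ x in Ioi (0:ℝ), x ^ (a + 2) * Real.exp (-x ^ 2 / 2)
    = ((a : ℝ) + 1) * ∫ x in Ioi (0:ℝ), x ^ a * Real.exp (-x ^ 2 / 2) := by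
  rw [gmomIoi, gmomIoi]
  push_cast
  rw [show (((a:ℝ) + 2) + 1) / 2 = ((a : ℝ) + 1) / 2 + 1 by ring,
    Real.Gamma_add_one (by positivity),
    show (-((a:ℝ) + 2 + 1)) / 2 = (-((a:ℝ)+1)) / 2 + (-1) by ring,
    Real.rpow_add one_half_pos, Real.rpow_neg_one]
  norm_num
  ring

lemma intg (a : ℕ) : Integrable fun x : ℝ => x ^ a * Real.exp (-x ^ 2 / 2) := by
  have h := integrable_rpow_mul_exp_neg_mul_sq (b := 1/2) one_half_pos
    (s := (a : ℝ)) (by exact_mod_cast neg_one_lt_zero.trans_le (Nat.cast_nonneg a))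
  have heq : (fun x : ℝ => x ^ ((a:ℝ)) * Real.exp (-(1/2) * x ^ 2))
      = fun x : ℝ => x ^ a * Real.exp (-x ^ 2 / 2) := by
    funext x
    rw [Real.rpow_natCast, show -(1/2 : ℝ) * x ^ 2 = -x ^ 2 / 2 by ring]
  rwa [heq] at h

lemma g2 (m : ℕ) : ∫ x : ℝ, x ^ (2 * m) * Real.exp (-x ^ 2 / 2)
    = 2 * ∫ x in Ioi (0:ℝ), x ^ (2 * m) * Real.exp (-x ^ 2 / 2) := by
  have key : (fun x : ℝ => |x| ^ (2*m) * Real.exp (-|x| ^ 2 / 2))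
      = fun x : ℝ => x ^ (2*m) * Real.exp (-x ^ 2 / 2) := by
    funext x
    rw [pow_mul, sq_abs, ← pow_mul]
  calc ∫ x : ℝ, x ^ (2*m) * Real.exp (-x ^ 2 / 2)
      = ∫ x : ℝ, |x| ^ (2*m) * Real.exp (-|x| ^ 2 / 2) := by rw [key]
    _ = 2 * ∫ x in Ioi (0:ℝ), x ^ (2*m) * Real.exp (-x ^ 2 / 2) :=
        integral_comp_abs (f := fun x => x ^ (2*m) * Real.exp (-x ^ 2 / 2))

lemma g2dfac (m : ℕ) : ∫ x : ℝ, x ^ (2 * m) * Real.exp (-x ^ 2 / 2)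
    = dfac m * ∫ x : ℝ, Real.exp (-x ^ 2 / 2) := by
  induction m with
  | zero => simp [dfac]
  | succ m ih =>
      have h1 : ∫ x : ℝ, x ^ (2 * (m+1)) * Real.exp (-x ^ 2 / 2)
          = (2 * (m:ℝ) + 1) * ∫ x : ℝ, x ^ (2 * m) * Real.exp (-x ^ 2 / 2) := by
        rw [g2, g2, show 2 * (m + 1) = 2 * m + 2 by ring, gstep]
        push_cast
        ring
      rw [h1, ih, dfac_succ]
      ring

lemma dfac_zero : dfac 0 = 1 := rfl

noncomputable def fser (c : ℝ) : PowerSeries ℝ :=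
  PowerSeries.mk fun m => c ^ m * dfac m / m.factorial

noncomputable def gser (c : ℝ) : PowerSeries ℝ :=
  PowerSeries.mk fun l => 2 ^ l * c ^ (l + 1)

lemma dfac_sum (n : ℕ) :
    ∑ j ∈ Finset.range (n+1), (2:ℝ) ^ (n - j) * (dfac j / j.factorial)
      = dfac (n+1) / n.factorial := by
  induction n with
  | zero => simp [dfac_succ, dfac_zero]
  | succ n ih =>
      rw [Finset.sum_range_succ]
      have h1 : ∀ j ∈ Finset.range (n+1),
          (2:ℝ) ^ (n + 1 - j) * (dfac j / j.factorial)
            = 2 * ((2:ℝ) ^ (n - j) * (dfac j / j.factorial)) := by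
        intro j hj
        rw [Finset.mem_range] at hj
        rw [show n + 1 - j = (n - j) + 1 by omega, pow_succ]
        ring
      rw [Finset.sum_congr rfl h1, ← Finset.mul_sum, ih]
      simp only [Nat.sub_self, pow_zero, one_mul]
      rw [dfac_succ (n+1)]
      have hn : (n.factorial : ℝ) ≠ 0 := Nat.cast_ne_zero.2 n.factorial_ne_zero
      have hn1 : ((n+1).factorial : ℝ) ≠ 0 := Nat.cast_ne_zero.2 (n+1).factorial_ne_zero
      rw [Nat.factorial_succ]
      push_cast
      field_simp

lemma coeff_derivativeFun' (f : PowerSeries ℝ) (n : ℕ) :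
    PowerSeries.coeff n f.derivativeFun = PowerSeries.coeff (n + 1) f * (n + 1) :=
  coeff_derivative f n

lemma fser_ode (c : ℝ) : (fser c).derivativeFun = gser c * fser c := by
  ext n
  rw [coeff_derivativeFun', coeff_mul]
  simp only [fser, gser, coeff_mk]
  rw [Finset.Nat.sum_antidiagonal_eq_sum_range_succ_mk]
  have h1 : ∀ k ∈ Finset.range (n+1),
      2 ^ k * c ^ (k+1) * (c ^ (n - k) * dfac (n - k) / (n - k).factorial)
        = c ^ (n+1) * ((2:ℝ) ^ k * (dfac (n-k) / (n-k).factorial)) := by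
    intro k hk
    rw [Finset.mem_range] at hk
    have hpow : c ^ (k+1) * c ^ (n-k) = c ^ (n+1) := by
      rw [← pow_add, show (k+1) + (n-k) = n + 1 by omega]
    linear_combination ((2:ℝ) ^ k * dfac (n-k) / ((n-k).factorial : ℝ)) * hpow
  rw [Finset.sum_congr rfl h1, ← Finset.mul_sum]
  have h2 : ∑ k ∈ Finset.range (n+1), (2:ℝ) ^ k * (dfac (n-k) / (n-k).factorial)
      = ∑ j ∈ Finset.range (n+1), (2:ℝ) ^ (n - j) * (dfac j / j.factorial) := by
    rw [← Finset.sum_range_reflect]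
    refine Finset.sum_congr rfl fun j hj => ?_
    rw [Finset.mem_range] at hj
    rw [show n + 1 - 1 - j = n - j by omega, show n - (n - j) = j by omega]
  rw [h2, dfac_sum]
  have hn : (n.factorial : ℝ) ≠ 0 := Nat.cast_ne_zero.2 n.factorial_ne_zero
  have hn1 : ((n+1).factorial : ℝ) ≠ 0 := Nat.cast_ne_zero.2 (n+1).factorial_ne_zero
  rw [Nat.factorial_succ]
  push_cast
  field_simp

lemma derivativeFun_one' : (1 : PowerSeries ℝ).derivativeFun = 0 := by
  exact derivativeFun_one

lemma derivativeFun_prod {ι : Type*} [DecidableEq ι] (t : Finset ι) (f : ι → PowerSeries ℝ) :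
    (∏ i ∈ t, f i).derivativeFun
      = ∑ i ∈ t, (f i).derivativeFun * ∏ j ∈ t.erase i, f j := by
  induction t using Finset.induction_on with
  | empty => simp [derivativeFun_one']
  | insert a t ha ih =>
      rw [Finset.prod_insert ha, derivativeFun_mul, Finset.sum_insert ha]
      rw [Finset.erase_insert ha]
      have h1 : ∀ i ∈ t, (f i).derivativeFun * ∏ j ∈ (insert a t).erase i, f j
          = f a * ((f i).derivativeFun * ∏ j ∈ t.erase i, f j) := by
        intro i hi
        have hia : i ≠ a := fun h => ha (h ▸ hi)
        rw [Finset.erase_insert_of_ne hia.symm, Finset.prod_insert (fun h => ha (Finset.mem_of_mem_erase h))]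
        ring
      rw [Finset.sum_congr rfl h1, ← Finset.mul_sum, ← ih]
      rw [smul_eq_mul, smul_eq_mul]
      ring

lemma ode_unique (Q F G : PowerSeries ℝ) (hF : F.derivativeFun = Q * F)
    (hG : G.derivativeFun = Q * G)
    (h0 : PowerSeries.coeff 0 F = PowerSeries.coeff 0 G) : F = G := by
  ext n
  induction n using Nat.strong_induction_on with
  | _ n ih =>
    match n with
    | 0 => exact h0
    | (n+1) =>
      have hF' := congrArg (PowerSeries.coeff n) hF
      have hG' := congrArg (PowerSeries.coeff n) hG
      rw [coeff_derivativeFun', coeff_mul] at hF' hG'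
      have key : PowerSeries.coeff (n+1) F * ((n:ℝ)+1)
          = PowerSeries.coeff (n+1) G * ((n:ℝ)+1) := by
        push_cast at hF' hG'
        rw [hF', hG']
        refine Finset.sum_congr rfl fun p hp => ?_
        rw [Finset.HasAntidiagonal.mem_antidiagonal] at hp
        rw [ih p.2 (by omega)]
      have hne : ((n:ℝ)+1) ≠ 0 := by positivity
      exact mul_right_cancel₀ hne key

lemma sum_finsuppAntidiag {ι M : Type*} [DecidableEq ι] [AddCommMonoid M] (s : Finset ι) (n : ℕ)
    (F : (ι → ℕ) → M) :
    ∑ l ∈ Finset.finsuppAntidiag s n, F ⇑l = ∑ f ∈ Finset.piAntidiag s n, F f := by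
  rw [Finset.finsuppAntidiag, Finset.sum_map]
  exact Finset.sum_attach _ _

lemma prod_ode {N : ℕ} (s : Fin N → ℝ) :
    (∏ i, fser (s i)).derivativeFun
      = (PowerSeries.mk fun l => 2 ^ l * ∑ i, s i ^ (l+1)) * ∏ i, fser (s i) := by
  rw [derivativeFun_prod]
  have h1 : ∀ i ∈ (Finset.univ : Finset (Fin N)),
      (fser (s i)).derivativeFun * ∏ j ∈ Finset.univ.erase i, fser (s j)
        = gser (s i) * ∏ j, fser (s j) := by
    intro i _
    rw [fser_ode, mul_assoc, Finset.mul_prod_erase Finset.univ (fun j => fser (s j)) (Finset.mem_univ i)]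
  rw [Finset.sum_congr rfl h1, ← Finset.sum_mul]
  congr 1
  ext l
  rw [map_sum]
  simp only [gser, coeff_mk]
  rw [Finset.mul_sum]

lemma coeff_prod_fser {N : ℕ} (s : Fin N → ℝ) (α : ℕ → ℝ)
    (hα : ∀ l : ℕ, 1 ≤ l → α l = (1 / (2 * l) : ℝ) * ∑ i, (s i) ^ l)
    (β : ℕ → ℝ) (hβ0 : β 0 = 1)
    (hβ : (PowerSeries.mk β : PowerSeries ℝ).derivativeFun =
      (PowerSeries.mk fun l => if l = 0 then (0 : ℝ) else α l).derivativeFun *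
        PowerSeries.mk β)
    (k : ℕ) :
    PowerSeries.coeff k (∏ i, fser (s i)) = 2 ^ k * β k := by
  have hrec : ∀ n : ℕ, β (n+1) * ((n:ℝ)+1)
      = ∑ p ∈ Finset.HasAntidiagonal.antidiagonal n, ((∑ i, s i ^ (p.1+1)) / 2) * β p.2 := by
    intro n
    have h := congrArg (PowerSeries.coeff n) hβ
    rw [coeff_derivativeFun', coeff_mk, coeff_mul] at h
    push_cast at h
    rw [h]
    refine Finset.sum_congr rfl fun p hp => ?_
    rw [coeff_derivativeFun', coeff_mk, if_neg (Nat.succ_ne_zero p.1),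
      hα (p.1+1) (Nat.le_add_left 1 p.1)]
    have hne : ((p.1:ℝ)+1) ≠ 0 := by positivity
    push_cast
    field_simp
    rw [coeff_mk]
  have hB : (PowerSeries.mk fun n => (2:ℝ)^n * β n).derivativeFun
      = (PowerSeries.mk fun l => 2 ^ l * ∑ i, s i ^ (l+1))
        * PowerSeries.mk fun n => (2:ℝ)^n * β n := by
    ext n
    rw [coeff_derivativeFun', coeff_mk, coeff_mul]
    have h1 : ∀ p ∈ Finset.HasAntidiagonal.antidiagonal n,
        (PowerSeries.coeff p.1) (PowerSeries.mk fun l => (2:ℝ) ^ l * ∑ i, s i ^ (l+1))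
          * (PowerSeries.coeff p.2) (PowerSeries.mk fun n => (2:ℝ)^n * β n)
          = (2:ℝ)^(n+1) * (((∑ i, s i ^ (p.1+1)) / 2) * β p.2) := by
      intro p hp
      rw [Finset.HasAntidiagonal.mem_antidiagonal] at hp
      rw [coeff_mk, coeff_mk, show (2:ℝ)^(n+1) = 2^p.1 * 2^p.2 * 2 by
        rw [← pow_add, hp, pow_succ]]
      ring
    rw [Finset.sum_congr rfl h1, ← Finset.mul_sum, ← hrec n]
    push_cast
    ring
  have h0 : PowerSeries.coeff 0 (∏ i, fser (s i))
      = PowerSeries.coeff 0 (PowerSeries.mk fun n => (2:ℝ)^n * β n) := by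
    rw [coeff_zero_eq_constantCoeff, map_prod]
    simp [fser, hβ0, dfac_zero]
  rw [ode_unique _ _ _ (prod_ode s) hB h0, coeff_mk]

lemma Dk_eq {N : ℕ} (s : Fin N → ℝ) (α : ℕ → ℝ)
    (hα : ∀ l : ℕ, 1 ≤ l → α l = (1 / (2 * l) : ℝ) * ∑ i, (s i) ^ l)
    (β : ℕ → ℝ) (hβ0 : β 0 = 1)
    (hβ : (PowerSeries.mk β : PowerSeries ℝ).derivativeFun =
      (PowerSeries.mk fun l => if l = 0 then (0 : ℝ) else α l).derivativeFun *
        PowerSeries.mk β)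
    (k : ℕ) :
    ∑ m ∈ Finset.piAntidiag (Finset.univ : Finset (Fin N)) k,
        (Nat.multinomial Finset.univ m : ℝ) * ∏ i, (s i ^ m i * dfac (m i))
      = (k.factorial : ℝ) * (2 ^ k * β k) := by
  have hc := coeff_prod_fser s α hα β hβ0 hβ k
  rw [PowerSeries.coeff_prod] at hc
  rw [sum_finsuppAntidiag (Finset.univ : Finset (Fin N)) k
    (fun f => ∏ i, PowerSeries.coeff (f i) (fser (s i)))] at hc
  simp only [fser, coeff_mk] at hc
  calc ∑ m ∈ Finset.piAntidiag (Finset.univ : Finset (Fin N)) k,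
        (Nat.multinomial Finset.univ m : ℝ) * ∏ i, (s i ^ m i * dfac (m i))
      = ∑ m ∈ Finset.piAntidiag (Finset.univ : Finset (Fin N)) k,
        (k.factorial : ℝ) * ∏ i, (s i ^ m i * dfac (m i) / (m i).factorial) := by
        refine Finset.sum_congr rfl fun m hm => ?_
        have hsum : ∑ i, m i = k := ((Finset.mem_piAntidiag).1 hm).1
        have hB : (∏ i, ((m i).factorial : ℝ)) ≠ 0 :=
          Finset.prod_ne_zero_iff.2 fun i _ => Nat.cast_ne_zero.2 (m i).factorial_ne_zero
        have hspec : (∏ i, ((m i).factorial : ℝ)) * (Nat.multinomial Finset.univ m : ℝ)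
            = (k.factorial : ℝ) := by
          rw [← Nat.cast_prod, ← Nat.cast_mul, Nat.multinomial_spec, hsum]
        rw [Finset.prod_div_distrib, ← hspec]
        field_simp
    _ = (k.factorial : ℝ) * (2 ^ k * β k) := by rw [← Finset.mul_sum, hc]


lemma pi_gauss {N : ℕ} (s : Fin N → ℝ) (k : ℕ) :
    ∫ y : Fin N → ℝ, (∑ i, s i * (y i)^2)^k * Real.exp (-(∑ i, (y i)^2)/2)
      = (∑ m ∈ Finset.piAntidiag (Finset.univ : Finset (Fin N)) k,
          (Nat.multinomial Finset.univ m : ℝ) * ∏ i, (s i ^ m i * dfac (m i)))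
        * (∫ x : ℝ, Real.exp (-x^2/2)) ^ N := by
  have expand : ∀ y : Fin N → ℝ, (∑ i, s i * (y i)^2)^k * Real.exp (-(∑ i, (y i)^2)/2)
      = ∑ m ∈ Finset.piAntidiag (Finset.univ : Finset (Fin N)) k,
          ((Nat.multinomial Finset.univ m : ℝ) * ∏ i, s i ^ m i)
            * ∏ i, ((y i) ^ (2 * m i) * Real.exp (-(y i)^2/2)) := by
    intro y
    rw [Finset.sum_pow_eq_sum_piAntidiag, Finset.sum_mul]
    refine Finset.sum_congr rfl fun m hm => ?_
    have hexp : Real.exp (-(∑ i, (y i)^2)/2) = ∏ i, Real.exp (-(y i)^2/2) := by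
      rw [← Real.exp_sum]
      congr 1
      rw [← Finset.sum_div, ← Finset.sum_neg_distrib]
    have hterm : ∀ i ∈ (Finset.univ : Finset (Fin N)),
        (s i * (y i)^2) ^ m i = s i ^ m i * (y i) ^ (2 * m i) := by
      intro i _
      rw [mul_pow, pow_mul]
    rw [hexp, Finset.prod_congr rfl hterm, Finset.prod_mul_distrib, Finset.prod_mul_distrib]
    ring
  simp only [expand]
  rw [integral_finset_sum _ (fun m _ =>
    ((Integrable.fintype_prod (f := fun i (x:ℝ) => x ^ (2 * m i) * Real.exp (-x^2/2))
      (fun i => intg (2 * m i))).const_mul _))]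
  rw [Finset.sum_mul]
  refine Finset.sum_congr rfl fun m _ => ?_
  rw [MeasureTheory.integral_const_mul, MeasureTheory.integral_fintype_prod_volume_eq_prod
    (fun i (x : ℝ) => x ^ (2 * m i) * Real.exp (-x^2/2))]
  have : ∀ i ∈ (Finset.univ : Finset (Fin N)),
      (∫ x : ℝ, x ^ (2 * m i) * Real.exp (-x^2/2))
        = dfac (m i) * ∫ x : ℝ, Real.exp (-x^2/2) := fun i _ => g2dfac (m i)
  rw [Finset.prod_congr rfl this, Finset.prod_mul_distrib, Finset.prod_const,
    Finset.card_univ, Fintype.card_fin, Finset.prod_mul_distrib]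
  ring

lemma euc_gauss {N : ℕ} (s : Fin N → ℝ) (k : ℕ) :
    ∫ x : EuclideanSpace ℝ (Fin N), (∑ i, s i * (x i)^2)^k * Real.exp (-‖x‖^2/2)
      = ∫ y : Fin N → ℝ, (∑ i, s i * (y i)^2)^k * Real.exp (-(∑ i, (y i)^2)/2) := by
  rw [← ((EuclideanSpace.volume_preserving_symm_measurableEquiv_toLp (Fin N)).integral_comp
    (MeasurableEquiv.toLp 2 (Fin N → ℝ)).symm.measurableEmbedding
    (fun y => (∑ i, s i * (y i)^2)^k * Real.exp (-(∑ i, (y i)^2)/2)))]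
  refine integral_congr_ae (Filter.Eventually.of_forall fun x => ?_)
  have hnorm : ‖x‖^2 = ∑ i, (x i)^2 := by
    rw [EuclideanSpace.norm_eq, Real.sq_sqrt (Finset.sum_nonneg fun i _ => sq_nonneg _)]
    simp [sq_abs]
  have happ : ∀ i, (MeasurableEquiv.toLp 2 (Fin N → ℝ)).symm x i = x i := fun i => rfl
  simp only [happ]
  rw [hnorm]

lemma volumeIoiPow_integral (n : ℕ) (w : ℝ → ℝ) :
    ∫ p : Ioi (0:ℝ), w p ∂(MeasureTheory.Measure.volumeIoiPow n)
      = ∫ r in Ioi (0:ℝ), r ^ n * w r := by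
  simp only [MeasureTheory.Measure.volumeIoiPow, ENNReal.ofReal]
  rw [integral_withDensity_eq_integral_smul
      ((measurable_subtype_coe.pow_const _).real_toNNReal) (fun p : Ioi (0:ℝ) => w p),
    integral_subtype_comap measurableSet_Ioi (fun a => Real.toNNReal (a ^ n) • w a),
    setIntegral_congr_fun measurableSet_Ioi (g := fun r => r ^ n * w r) (fun x hx => ?_)]
  rw [NNReal.smul_def, Real.coe_toNNReal _ (pow_nonneg (le_of_lt hx) _), smul_eq_mul]

lemma polar_eq {N : ℕ} (hN : 0 < N) (s : Fin N → ℝ) (k : ℕ) :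
    ∫ x : EuclideanSpace ℝ (Fin N), (∑ i, s i * (x i)^2)^k * Real.exp (-‖x‖^2/2)
      = (∫ u : Metric.sphere (0 : EuclideanSpace ℝ (Fin N)) 1,
          (∑ i, s i * ((u : EuclideanSpace ℝ (Fin N)) i)^2)^k
            ∂((volume : Measure (EuclideanSpace ℝ (Fin N))).toSphere))
        * ∫ r in Ioi (0:ℝ), r ^ (N - 1 + 2*k) * Real.exp (-r^2/2) := by
  set E := EuclideanSpace ℝ (Fin N)
  haveI : Nonempty (Fin N) := ⟨⟨0, hN⟩⟩
  haveI : Nontrivial E := inferInstance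
  have hdim : Module.finrank ℝ E = N := finrank_euclideanSpace_fin
  set f : Metric.sphere (0 : E) 1 → ℝ := fun u => (∑ i, s i * ((u : E) i)^2)^k with hf
  set w : ℝ → ℝ := fun r => r ^ (2*k) * Real.exp (-r^2/2) with hw
  set F : E → ℝ := fun x => (∑ i, s i * (x i)^2)^k * Real.exp (-‖x‖^2/2) with hF
  have step1 : ∫ x : E, F x
      = ∫ x : ({0}ᶜ : Set E), F x.1 ∂((volume : Measure E).comap Subtype.val) := by
    rw [integral_subtype_comap (measurableSet_singleton (0:E)).compl fun x => F x,
      restrict_compl_singleton]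
  have step2 : ∫ x : ({0}ᶜ : Set E), F x.1 ∂((volume : Measure E).comap Subtype.val)
      = ∫ p : (Metric.sphere (0:E) 1 × Ioi (0:ℝ)), f p.1 * w p.2
          ∂((volume : Measure E).toSphere.prod
            (MeasureTheory.Measure.volumeIoiPow (Module.finrank ℝ E - 1))) := by
    rw [← (volume : Measure E).measurePreserving_homeomorphUnitSphereProd.integral_comp
      (Homeomorph.measurableEmbedding _) (fun p => f p.1 * w p.2)]
    refine integral_congr_ae (Filter.Eventually.of_forall fun x => ?_)
    have hx : (x : E) ≠ 0 := x.2
    have hnx : ‖(x : E)‖ ≠ 0 := norm_ne_zero_iff.2 hx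
    show F x.1 = f ((homeomorphUnitSphereProd E) x).1 * w (((homeomorphUnitSphereProd E) x).2 : ℝ)
    rw [hf, hw, hF]
    simp only [homeomorphUnitSphereProd_apply_fst_coe, homeomorphUnitSphereProd_apply_snd_coe]
    have hS : (∑ i, s i * ((‖(x:E)‖⁻¹ • (x:E) : E) i)^2)
        = (‖(x:E)‖⁻¹)^2 * ∑ i, s i * ((x:E) i)^2 := by
      rw [Finset.mul_sum]
      refine Finset.sum_congr rfl fun i _ => ?_
      have : ((‖(x:E)‖⁻¹ • (x:E) : E) i) = ‖(x:E)‖⁻¹ * (x:E) i := rfl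
      rw [this]
      ring
    rw [hS, mul_pow]
    have h2 : ((‖(x:E)‖⁻¹)^2)^k * (‖(x:E)‖^(2*k)) = 1 := by
      rw [pow_mul, ← mul_pow, ← mul_pow, inv_mul_cancel₀ hnx, one_pow, one_pow]
    calc (∑ i, s i * ((x:E) i)^2)^k * Real.exp (-‖(x:E)‖^2/2)
        = (((‖(x:E)‖⁻¹)^2)^k * (‖(x:E)‖^(2*k)))
            * ((∑ i, s i * ((x:E) i)^2)^k * Real.exp (-‖(x:E)‖^2/2)) := by
          rw [h2, one_mul]
      _ = ((‖(x:E)‖⁻¹)^2)^k * (∑ i, s i * ((x:E) i)^2)^k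
            * (‖(x:E)‖^(2*k) * Real.exp (-‖(x:E)‖^2/2)) := by ring
  have step3 : ∫ p : (Metric.sphere (0:E) 1 × Ioi (0:ℝ)), f p.1 * w p.2
        ∂((volume : Measure E).toSphere.prod
          (MeasureTheory.Measure.volumeIoiPow (Module.finrank ℝ E - 1)))
      = (∫ u, f u ∂((volume : Measure E).toSphere))
          * ∫ p : Ioi (0:ℝ), w p ∂(MeasureTheory.Measure.volumeIoiPow (Module.finrank ℝ E - 1)) :=
    integral_prod_mul f (fun r : Ioi (0:ℝ) => w r)
  rw [step1, step2, step3, volumeIoiPow_integral, hdim]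
  congr 1
  refine setIntegral_congr_fun measurableSet_Ioi fun r hr => ?_
  rw [hw]
  rw [← mul_assoc, ← pow_add]


lemma radial_prod {N : ℕ} (hN : 0 < N) (k : ℕ) :
    (∫ r in Ioi (0:ℝ), r ^ (N - 1 + 2*k) * Real.exp (-r^2/2))
      = (∏ j ∈ Finset.range k, ((N:ℝ) + 2*j))
          * ∫ r in Ioi (0:ℝ), r ^ (N-1) * Real.exp (-r^2/2) := by
  induction k with
  | zero => simp
  | succ k ih =>
      rw [show N - 1 + 2*(k+1) = (N - 1 + 2*k) + 2 by omega, gstep, ih, Finset.prod_range_succ]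
      have h : (N - 1 + 2*k + 1 : ℕ) = N + 2*k := by omega
      have hcast : ((N - 1 + 2*k : ℕ) : ℝ) + 1 = (N:ℝ) + 2*(k:ℝ) := by
        calc ((N - 1 + 2*k : ℕ) : ℝ) + 1 = ((N - 1 + 2*k + 1 : ℕ) : ℝ) := by push_cast; ring
          _ = ((N + 2*k : ℕ) : ℝ) := by rw [h]
          _ = (N:ℝ) + 2*(k:ℝ) := by push_cast; ring
      rw [hcast]
      ring

/-- von Neumann's moment formula: with `α_l = (1/(2l)) ∑ s_i^l` and `β_k`
defined by the formal power series identity `1 + ∑ β_k z^k = exp (∑_{l ≥ 1} α_l z^l)`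
(expressed via `β 0 = 1` and the equivalent derivative identity `B' = A' B`), for `u`
uniform on the unit sphere of `ℝ^N` and `x = ∑ s_k u_k²`,
`E[x^k] = 2^k k! β_k / (N (N+2) ⋯ (N+2k-2))`. -/
theorem vonNeumann_moment_formula (N : ℕ) (hN : 0 < N) (s : Fin N → ℝ) (hs : ∀ k, 0 ≤ s k)
    (α : ℕ → ℝ) (hα : ∀ l : ℕ, 1 ≤ l → α l = (1 / (2 * l) : ℝ) * ∑ i, (s i) ^ l)
    (β : ℕ → ℝ) (hβ0 : β 0 = 1)
    (hβ : (PowerSeries.mk β : PowerSeries ℝ).derivativeFun =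
      (PowerSeries.mk fun l => if l = 0 then (0 : ℝ) else α l).derivativeFun *
        PowerSeries.mk β)
    (k : ℕ) (hk : 1 ≤ k) :
    ∫ u, (∑ j, s j * ((u : EuclideanSpace ℝ (Fin N)) j) ^ 2) ^ k ∂(sphereUniform N)
      = 2 ^ k * (k.factorial : ℝ) * β k / ∏ j ∈ Finset.range k, ((N : ℝ) + 2 * j) := by
  classical
  set B := ∫ x : ℝ, Real.exp (-x^2/2) with hBdef
  set R0 := ∫ r in Ioi (0:ℝ), r ^ (N - 1) * Real.exp (-r^2/2) with hR0def
  set P := ∏ j ∈ Finset.range k, ((N:ℝ) + 2*j) with hPdef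
  have hDk : ∀ k : ℕ, (∑ m ∈ Finset.piAntidiag (Finset.univ : Finset (Fin N)) k,
      (Nat.multinomial Finset.univ m : ℝ) * ∏ i, (s i ^ m i * dfac (m i)))
        = (k.factorial : ℝ) * (2 ^ k * β k) := fun k => Dk_eq s α hα β hβ0 hβ k
  have hp0 : 0 < ∫ x in Ioi (0:ℝ), Real.exp (-x^2/2) := by
    have := gpos 0
    simpa using this
  have hBeq : B = 2 * ∫ x in Ioi (0:ℝ), Real.exp (-x^2/2) := by
    have := g2 0
    simpa using this
  have hB_pos : 0 < B := by rw [hBeq]; linarith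
  have hR0_pos : 0 < R0 := gpos (N-1)
  have hP_pos : 0 < P := Finset.prod_pos fun j _ => by positivity
  have hmain : ∀ k : ℕ,
      ((k.factorial : ℝ) * (2 ^ k * β k)) * B ^ N
        = (∫ u : Metric.sphere (0 : EuclideanSpace ℝ (Fin N)) 1,
            (∑ i, s i * ((u : EuclideanSpace ℝ (Fin N)) i)^2)^k
              ∂((volume : Measure (EuclideanSpace ℝ (Fin N))).toSphere))
          * ((∏ j ∈ Finset.range k, ((N:ℝ) + 2*j)) * R0) := by
    intro k
    rw [hBdef, hR0def, ← hDk k, ← pi_gauss, ← euc_gauss, polar_eq hN s k, radial_prod hN k]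
  have hT0 : B ^ N
      = (volume.toSphere (Set.univ : Set (Metric.sphere (0 : EuclideanSpace ℝ (Fin N)) 1))).toReal
          * R0 := by
    have h0 := hmain 0
    simp only [pow_zero, Nat.factorial_zero, Nat.cast_one, hβ0, mul_one, one_mul,
      Finset.range_zero, Finset.prod_empty] at h0
    rw [integral_const, smul_eq_mul, mul_one] at h0
    exact h0
  have htoReal : (volume.toSphere
      (Set.univ : Set (Metric.sphere (0 : EuclideanSpace ℝ (Fin N)) 1))).toReal = B ^ N / R0 := by
    rw [hT0]
    field_simp
  have hk' := hmain k
  rw [show sphereUniform N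
      = ((volume : Measure (EuclideanSpace ℝ (Fin N))).toSphere Set.univ)⁻¹ •
          (volume : Measure (EuclideanSpace ℝ (Fin N))).toSphere from rfl]
  rw [integral_smul_measure, ENNReal.toReal_inv, htoReal, smul_eq_mul]
  set T := ∫ u : Metric.sphere (0 : EuclideanSpace ℝ (Fin N)) 1,
      (∑ j, s j * ((u : EuclideanSpace ℝ (Fin N)) j)^2)^k
        ∂((volume : Measure (EuclideanSpace ℝ (Fin N))).toSphere) with hTdef
  have hT : T = (k.factorial:ℝ) * (2^k * β k) * B^N / (P * R0) := by
    rw [eq_div_iff (ne_of_gt (mul_pos hP_pos hR0_pos))]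
    rw [hk']
  rw [hT]
  have hBN : (0:ℝ) < B ^ N := by positivity
  field_simp
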